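/- Let A be an n×n positive definite Hermitian matrix with spectrum contained in [m, M] where 0 < m < M, and let V be an n×k matrix with V*V = I_k. Then V* A² V ≤ K(m, M, 2) · (V* A V)², where K(m, M, 2) = (M+m)²/(4Mm). -/

import Mathlib

open Matrix ComplexOrder

private lemma smul_psd {N : ℕ} {S : Matrix (Fin N) (Fin N) ℂ} (hS : S.PosSemidef) {r : ℝ}
    (hr : 0 ≤ r) : (r • S).PosSemidef := by
  refine posSemidef_iff_dotProduct_mulVec.mpr ⟨?_, ?_⟩
  · unfold Matrix.IsHermitian
    rw [conjTranspose_smul, star_trivial, hS.1]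
  · intro x
    rw [smul_mulVec, dotProduct_smul]
    have := hS.dotProduct_mulVec_nonneg x
    rw [Complex.real_smul]
    exact mul_nonneg (by exact_mod_cast hr) this

theorem stmt_2 {n k : ℕ} {A : Matrix (Fin n) (Fin n) ℂ} (hA : A.PosDef)
    (m M : ℝ) (hm : 0 < m) (hmM : m < M)
    (hspec : ∀ i, hA.1.eigenvalues i ∈ Set.Icc m M)
    (V : Matrix (Fin n) (Fin k) ℂ) (hV : Vᴴ * V = 1) :
    (((M + m) ^ 2 / (4 * M * m) : ℝ) • (Vᴴ * A * V) ^ 2 - Vᴴ * A ^ 2 * V).PosSemidef := by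
  have hM : 0 < M := hm.trans hmM
  set K : ℝ := (M + m) ^ 2 / (4 * M * m) with hK
  set c : ℝ := 2 * M * m / (M + m) with hc
  have hMm : M + m ≠ 0 := by positivity
  set B : Matrix (Fin k) (Fin k) ℂ := Vᴴ * A * V with hB
  -- Step 1: X := (M+m) • A - (M*m) • 1 - A^2 is PSD
  set U : Matrix (Fin n) (Fin n) ℂ := (hA.1.eigenvectorUnitary : Matrix (Fin n) (Fin n) ℂ) with hU
  have hUU : Uᴴ * U = 1 := by
    rw [← Matrix.star_eq_conjTranspose]
    exact Unitary.coe_star_mul_self hA.1.eigenvectorUnitary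
  set D : Matrix (Fin n) (Fin n) ℂ := diagonal (RCLike.ofReal ∘ hA.1.eigenvalues) with hD
  have hAeq : A = U * D * Uᴴ := by
    rw [hU, hD, ← Matrix.star_eq_conjTranspose]
    exact hA.1.spectral_theorem
  set f : Fin n → ℂ := fun i => ((M + m) * hA.1.eigenvalues i - M * m
    - hA.1.eigenvalues i ^ 2 : ℝ) with hf
  have hdiag : diagonal f = (M + m) • D - (M * m) • 1 - D * D := by
    rw [hD, diagonal_mul_diagonal]
    ext i j
    rcases eq_or_ne i j with h | h
    · subst h
      simp only [hf, Matrix.sub_apply, Matrix.smul_apply, Matrix.diagonal_apply_eq,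
        Matrix.one_apply_eq, Function.comp_apply, smul_eq_mul, Complex.real_smul,
        RCLike.ofReal, Complex.coe_algebraMap]
      push_cast
      ring
    · simp [Matrix.diagonal_apply_ne _ h, Matrix.one_apply_ne h]
  have hmulU : ∀ (X : Matrix (Fin n) (Fin n) ℂ), Uᴴ * (U * X) = X := by
    intro X
    rw [← Matrix.mul_assoc, hUU, Matrix.one_mul]
  have hA2 : A ^ 2 = U * (D * D) * Uᴴ := by
    rw [pow_two, hAeq]
    simp only [Matrix.mul_assoc]
    rw [hmulU]
  have hXeq : U * diagonal f * Uᴴ = (M + m) • A - (M * m) • 1 - A ^ 2 := by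
    rw [hdiag, hA2]
    have h1 : U * (1 : Matrix (Fin n) (Fin n) ℂ) * Uᴴ = 1 := by
      rw [Matrix.mul_one]
      rw [← Matrix.star_eq_conjTranspose, hU]
      exact Unitary.coe_mul_star_self hA.1.eigenvectorUnitary
    rw [Matrix.mul_sub, Matrix.mul_sub, Matrix.sub_mul, Matrix.sub_mul,
      Matrix.mul_smul, Matrix.mul_smul, Matrix.smul_mul, Matrix.smul_mul, h1, ← hAeq]
  have hXpsd : ((M + m) • A - (M * m) • 1 - A ^ 2).PosSemidef := by
    rw [← hXeq]
    refine Matrix.PosSemidef.mul_mul_conjTranspose_same ?_ U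
    refine posSemidef_diagonal_iff.mpr fun i => ?_
    have : (0:ℝ) ≤ (M + m) * hA.1.eigenvalues i - M * m - hA.1.eigenvalues i ^ 2 := by
      nlinarith [(hspec i).1, (hspec i).2]
    simpa [hf] using Complex.zero_le_real.mpr this
  -- Step 2: conjugate by V
  have hS2 : ((M + m) • B - (M * m) • 1 - Vᴴ * A ^ 2 * V).PosSemidef := by
    have := hXpsd.conjTranspose_mul_mul_same V
    have heq : Vᴴ * ((M + m) • A - (M * m) • 1 - A ^ 2) * V
        = (M + m) • B - (M * m) • 1 - Vᴴ * A ^ 2 * V := by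
      rw [Matrix.mul_sub, Matrix.mul_sub, Matrix.sub_mul, Matrix.sub_mul,
        Matrix.mul_smul, Matrix.mul_smul, Matrix.smul_mul, Matrix.smul_mul,
        Matrix.mul_one, hV, hB, Matrix.mul_assoc, Matrix.mul_assoc]
    rwa [heq] at this
  -- Step 3: K • (B - c•1)^2 is PSD
  have hBherm : B.IsHermitian := isHermitian_conjTranspose_mul_mul V hA.1
  have hCherm : (B - c • 1).IsHermitian := by
    unfold Matrix.IsHermitian
    rw [conjTranspose_sub, conjTranspose_smul, star_trivial, conjTranspose_one, hBherm.eq]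
  have hS1 : (K • ((B - c • 1) * (B - c • 1))).PosSemidef := by
    refine smul_psd ?_ (by positivity)
    have : (B - c • 1) * (B - c • 1) = (B - c • 1)ᴴ * (B - c • 1) := by rw [hCherm.eq]
    rw [this]
    exact posSemidef_conjTranspose_mul_self _
  -- Step 4: combine
  have key : K • B ^ 2 - Vᴴ * A ^ 2 * V
      = K • ((B - c • 1) * (B - c • 1)) + ((M + m) • B - (M * m) • 1 - Vᴴ * A ^ 2 * V) := by
    have hexp : (B - c • 1) * (B - c • 1) = B * B - (2 * c) • B + (c * c) • 1 := by
      simp only [Matrix.sub_mul, Matrix.mul_sub, Matrix.smul_mul, Matrix.mul_smul,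
        Matrix.mul_one, Matrix.one_mul, smul_smul]
      module
    rw [pow_two, hexp]
    have hM0 : M ≠ 0 := hM.ne'
    have hm0 : m ≠ 0 := hm.ne'
    have e1 : K * (2 * c) = M + m := by
      show (M + m) ^ 2 / (4 * M * m) * (2 * (2 * M * m / (M + m))) = M + m
      field_simp; ring
    have e2 : K * (c * c) = M * m := by
      show (M + m) ^ 2 / (4 * M * m) * (2 * M * m / (M + m) * (2 * M * m / (M + m))) = M * m
      field_simp; ring
    clear_value K c
    match_scalars
    all_goals simp only [hK, hc]
    all_goals field_simp
    all_goals ring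
  rw [key]
  exact hS1.add hS2
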